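/- If a convex polygon with n ≥ 5 vertices (no three vertices collinear) admits a Simson point (a point whose orthogonal projections onto the lines containing all n sides are collinear), then a contradiction follows; i.e., no nondegenerate convex n-gon with n ≥ 5 admits a Simson point. -/

import Mathlib

open EuclideanGeometry RealInnerProductSpace

namespace SimsonAux
abbrev Pt := EuclideanSpace ℝ (Fin 2)

lemma pt_ext {x y : Pt} (h0 : x 0 = y 0) (h1 : x 1 = y 1) : x = y := by
  ext i; fin_cases i <;> assumption

lemma mem_pair_iff {x y u : Pt} :
    u ∈ affineSpan ℝ ({x, y} : Set Pt) ↔ ∃ r : ℝ, r • (y - x) = u - x := by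
  have := vadd_left_mem_affineSpan_pair (k := ℝ) (p₁ := x) (p₂ := y) (v := u -ᵥ x)
  rw [vsub_vadd] at this
  exact this

lemma dep2' {w0 w1 u0 u1 : ℝ} (hw : ¬ (w0 = 0 ∧ w1 = 0))
    (h : w0 * u1 - w1 * u0 = 0) : ∃ r : ℝ, u0 = r * w0 ∧ u1 = r * w1 := by
  rcases not_and_or.1 hw with hw0 | hw1
  · exact ⟨u0 / w0, by field_simp, by field_simp; linarith⟩
  · exact ⟨u1 / w1, by field_simp; linarith, by field_simp⟩

lemma ddep {x1 y1 x2 y2 z0 z1 : ℝ} (h1 : x1 * z1 - y1 * z0 = 0)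
    (h2 : x2 * z1 - y2 * z0 = 0) (hz : ¬ (z0 = 0 ∧ z1 = 0)) :
    x1 * y2 - y1 * x2 = 0 := by
  rcases not_and_or.1 hz with h | h
  · have e1 : y1 = x1 * z1 / z0 := by field_simp; linarith
    have e2 : y2 = x2 * z1 / z0 := by field_simp; linarith
    rw [e1, e2]; field_simp; ring
  · have e1 : x1 = y1 * z0 / z1 := by field_simp; linarith
    have e2 : x2 = y2 * z0 / z1 := by field_simp; linarith
    rw [e1, e2]; field_simp; ring

lemma cross_zero_collinear {x y z : Pt}
    (h : (y 0 - x 0) * (z 1 - x 1) - (y 1 - x 1) * (z 0 - x 0) = 0) :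
    Collinear ℝ ({x, y, z} : Set Pt) := by
  by_cases hxy : y = x
  · have hsub : ({x, y, z} : Set Pt) ⊆ {x, z} := by
      intro p hp
      rcases hp with hp | hp | hp
      · exact Or.inl hp
      · exact Or.inl (by rw [hp, hxy])
      · exact Or.inr hp
    exact (collinear_pair ℝ x z).subset hsub
  · rw [collinear_iff_of_mem (Set.mem_insert x {y, z})]
    refine ⟨y - x, ?_⟩
    intro p hp
    rcases hp with hp | hp | hp
    · exact ⟨0, by rw [hp]; simp⟩
    · exact ⟨1, by rw [hp]; simp⟩
    · have hw : ¬ ((y 0 - x 0) = 0 ∧ (y 1 - x 1) = 0) := by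
        rintro ⟨h0, h1⟩
        exact hxy (pt_ext (by linarith) (by linarith))
      obtain ⟨r, hr0, hr1⟩ := dep2' hw h
      refine ⟨r, ?_⟩
      rw [hp]
      apply pt_ext
      · show z 0 = r * (y 0 - x 0) + x 0
        linarith
      · show z 1 = r * (y 1 - x 1) + x 1
        linarith

lemma mem_span_cross {x y u : Pt} (h : u ∈ affineSpan ℝ ({x, y} : Set Pt)) :
    (y 0 - x 0) * (u 1 - x 1) - (y 1 - x 1) * (u 0 - x 0) = 0 := by
  rw [mem_pair_iff] at h
  obtain ⟨r, hr⟩ := h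
  have h0 : u 0 - x 0 = r * (y 0 - x 0) := (congrArg (fun z : Pt => z 0) hr).symm
  have h1 : u 1 - x 1 = r * (y 1 - x 1) := (congrArg (fun z : Pt => z 1) hr).symm
  rw [h0, h1]; ring

lemma cross_mem_span {x y u : Pt} (hxy : x ≠ y)
    (h : (y 0 - x 0) * (u 1 - x 1) - (y 1 - x 1) * (u 0 - x 0) = 0) :
    u ∈ affineSpan ℝ ({x, y} : Set Pt) := by
  rw [mem_pair_iff]
  have hw : ¬ ((y 0 - x 0) = 0 ∧ (y 1 - x 1) = 0) := by
    rintro ⟨h0, h1⟩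
    exact hxy (pt_ext (by linarith) (by linarith)).symm
  obtain ⟨r, hr0, hr1⟩ := dep2' hw h
  refine ⟨r, ?_⟩
  apply pt_ext
  · show r * (y 0 - x 0) = u 0 - x 0
    linarith
  · show r * (y 1 - x 1) = u 1 - x 1
    linarith

lemma ssameside_cross {x y u w : Pt} (hxy : x ≠ y)
    (h : (affineSpan ℝ ({x, y} : Set Pt)).SSameSide u w) :
    0 < ((y 0 - x 0) * (u 1 - x 1) - (y 1 - x 1) * (u 0 - x 0)) *
        ((y 0 - x 0) * (w 1 - x 1) - (y 1 - x 1) * (w 0 - x 0)) := by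
  obtain ⟨⟨p₁, hp₁, p₂, hp₂, hray⟩, hu, hw⟩ := h
  set cu := (y 0 - x 0) * (u 1 - x 1) - (y 1 - x 1) * (u 0 - x 0) with hcu
  set cw := (y 0 - x 0) * (w 1 - x 1) - (y 1 - x 1) * (w 0 - x 0) with hcw
  have hcu0 : cu ≠ 0 := fun h0 => hu (cross_mem_span hxy h0)
  have hcw0 : cw ≠ 0 := fun h0 => hw (cross_mem_span hxy h0)
  have hp1c := mem_span_cross hp₁
  have hp2c := mem_span_cross hp₂
  rcases hray with h0 | h0 | ⟨r₁, r₂, hr₁, hr₂, hr⟩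
  · exfalso; apply hu
    have h0' : u - p₁ = 0 := h0
    rw [sub_eq_zero.1 h0']; exact hp₁
  · exfalso; apply hw
    have h0' : w - p₂ = 0 := h0
    rw [sub_eq_zero.1 h0']; exact hp₂
  · have hk0 : r₁ * (u 0 - p₁ 0) = r₂ * (w 0 - p₂ 0) :=
      congrArg (fun z : Pt => z 0) (show r₁ • (u - p₁) = r₂ • (w - p₂) from hr)
    have hk1 : r₁ * (u 1 - p₁ 1) = r₂ * (w 1 - p₂ 1) :=
      congrArg (fun z : Pt => z 1) (show r₁ • (u - p₁) = r₂ • (w - p₂) from hr)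
    have ecu : cu = (y 0 - x 0) * (u 1 - p₁ 1) - (y 1 - x 1) * (u 0 - p₁ 0) := by
      rw [hcu]; linear_combination hp1c
    have ecw : cw = (y 0 - x 0) * (w 1 - p₂ 1) - (y 1 - x 1) * (w 0 - p₂ 0) := by
      rw [hcw]; linear_combination hp2c
    have e1 : r₁ * cu = r₂ * cw := by
      rw [ecu, ecw]
      linear_combination (y 0 - x 0) * hk1 - (y 1 - x 1) * hk0
    have e2 : cw = (r₁ / r₂) * cu := by field_simp; linarith
    rw [e2]
    have hq : 0 < r₁ / r₂ := div_pos hr₁ hr₂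
    rcases hcu0.lt_or_gt with hc | hc
    · nlinarith [mul_pos hq (mul_pos_of_neg_of_neg hc hc)]
    · nlinarith [mul_pos hq (mul_pos hc hc)]

lemma per_mod {α : Type*} {n : ℕ} (g : ℕ → α) (hg : ∀ i, g (i + n) = g i) : ∀ i, g i = g (i % n) := by
  have key : ∀ k x, g (x + n * k) = g x := by
    intro k
    induction k with
    | zero => intro x; simp
    | succ m ih => intro x; rw [show x + n * (m + 1) = (x + n * m) + n by ring, hg, ih]
  intro i
  conv_lhs => rw [← Nat.mod_add_div i n]
  exact key (i / n) (i % n)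

set_option maxHeartbeats 1000000 in
lemma real_main (n : ℕ) (hn : 5 ≤ n) (a b f : ℕ → ℝ) (p h : ℝ)
    (hpa : ∀ i, a (i + n) = a i) (hpb : ∀ i, b (i + n) = b i)
    (Hnd : ∀ i j k : ℕ, i % n ≠ j % n → i % n ≠ k % n → j % n ≠ k % n →
      (a j - a i) * (b k - b i) - (b j - b i) * (a k - a i) ≠ 0)
    (Hconv : ∀ i j k : ℕ, j % n ≠ i % n → j % n ≠ (i + 1) % n →
      k % n ≠ i % n → k % n ≠ (i + 1) % n →
      0 < ((a (i+1) - a i) * (b j - b i) - (b (i+1) - b i) * (a j - a i)) *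
          ((a (i+1) - a i) * (b k - b i) - (b (i+1) - b i) * (a k - a i)))
    (Hfeet : ∀ i, (a (i+1) - a i) * (0 - b i) - (b (i+1) - b i) * (f i - a i) = 0)
    (Hperp : ∀ i, (p - f i) * (a (i+1) - a i) + h * (b (i+1) - b i) = 0) : False := by
  have hn0 : 0 < n := by omega
  have hne2 : ∀ (i k l : ℕ), k < n → l < n → k ≠ l → (i + k) % n ≠ (i + l) % n := by
    intro i k l hk hl hkl he
    have hm : Nat.ModEq n (i + k) (i + l) := he
    have h2 : Nat.ModEq n k l := Nat.ModEq.add_left_cancel' i hm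
    have h3 : k % n = l % n := h2
    rw [Nat.mod_eq_of_lt hk, Nat.mod_eq_of_lt hl] at h3
    exact hkl h3
  have hne1 : ∀ i k, 0 < k → k < n → (i + k) % n ≠ i % n := by
    intro i k h1 h2
    simpa using hne2 i k 0 h2 hn0 (by omega)
  have unz : ∀ i, ¬ (a (i+1) - a i = 0 ∧ b (i+1) - b i = 0) := by
    rintro i ⟨h1, h2⟩
    exact Hnd i (i+1) (i+2) (hne1 i 1 one_pos (by omega)).symm
      (hne1 i 2 two_pos (by omega)).symm (hne2 i 1 2 (by omega) (by omega) (by omega))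
      (by linear_combination (b (i+2) - b i) * h1 - (a (i+2) - a i) * h2)

  by_cases hh : h = 0
  · have Hperp0 : ∀ i, (p - f i) * (a (i+1) - a i) = 0 := by
      intro i
      have hx := Hperp i
      rw [hh] at hx
      linarith

    set G : ℕ → ℝ := fun i => (a (i+1) - a i) * (0 - b i) - (b (i+1) - b i) * (p - a i) with hG
    have hGper : ∀ i, G (i + n) = G i := by
      intro i
      simp only [hG]
      rw [show i + n + 1 = (i+1) + n from by omega, hpa, hpa, hpb, hpb]
    have hvert : ∀ i, ¬ (a (i+1) - a i = 0 ∧ a (i+2) - a (i+1) = 0) := by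
      rintro i ⟨h1, h2⟩
      exact Hnd i (i+1) (i+2) (hne1 i 1 one_pos (by omega)).symm
        (hne1 i 2 two_pos (by omega)).symm (hne2 i 1 2 (by omega) (by omega) (by omega))
        (by linear_combination (b (i+2) - b i) * h1 - (b (i+1) - b i) * h1 - (b (i+1) - b i) * h2)
    have hQ : ∀ i, (a (i+1) - a i = 0) ∨ G i = 0 := by
      intro i
      by_cases hα : a (i+1) - a i = 0
      · exact Or.inl hα
      · right
        have hperp := Hperp0 i
        have hf : f i = p := by
          rcases mul_eq_zero.1 hperp with hc | hc
          · linarith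
          · exact absurd hc hα
        simp only [hG]
        linear_combination Hfeet i + (b (i+1) - b i) * hf
    by_cases hA : ∃ i, G i = 0 ∧ G (i+1) = 0
    · obtain ⟨i, hGi, hGi1⟩ := hA
      by_cases hm : a (i+1) = p ∧ b (i+1) = 0
      · obtain ⟨hma, hmb⟩ := hm
        have key : ∀ i', G i' = 0 → i' % n ≠ (i+1) % n → (i'+1) % n ≠ (i+1) % n → False := by
          intro i' hGi' h1 h2
          apply Hnd i' (i'+1) (i+1+n) (hne1 i' 1 one_pos (by omega)).symm
            (by rw [Nat.add_mod_right]; exact h1)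
            (by rw [Nat.add_mod_right]; exact h2)
          rw [hpa, hpb, hma, hmb]
          simp only [hG] at hGi'
          linear_combination hGi'
        by_cases hv : a (i+2+1) - a (i+2) = 0
        · have hv3 : ¬ (a (i+3+1) - a (i+3) = 0) := by
            intro hc
            exact hvert (i+2) ⟨by convert hv using 3, by convert hc using 3 <;> omega⟩
          have hG3 : G (i+3) = 0 := (hQ (i+3)).resolve_left hv3
          exact key (i+3) hG3
            (by simpa using hne2 (i+1) 2 0 (by omega) hn0 (by omega))
            (by simpa using hne2 (i+1) 3 0 (by omega) hn0 (by omega))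
        · have hG2 : G (i+2) = 0 := (hQ (i+2)).resolve_left hv
          exact key (i+2) hG2
            (by simpa using hne2 (i+1) 1 0 (by omega) hn0 (by omega))
            (by simpa using hne2 (i+1) 2 0 (by omega) hn0 (by omega))
      · push_neg at hm
        simp only [hG] at hGi hGi1
        have h1 : (a (i+1) - a i) * (0 - b (i+1)) - (b (i+1) - b i) * (p - a (i+1)) = 0 := by
          linear_combination hGi
        have hz : ¬ (p - a (i+1) = 0 ∧ 0 - b (i+1) = 0) := by
          rintro ⟨z0, z1⟩
          exact hm (by linarith) (by linarith)
        have hdd := ddep h1 hGi1 hz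
        exact Hnd i (i+1) (i+2) (hne1 i 1 one_pos (by omega)).symm
          (hne1 i 2 two_pos (by omega)).symm (hne2 i 1 2 (by omega) (by omega) (by omega))
          (by linear_combination hdd)
    · push_neg at hA
      have halt : ∀ i, G i = 0 ↔ ¬ (G (i+1) = 0) := by
        intro i
        constructor
        · exact hA i
        · intro hni
          rcases hQ i with hα | hGz
          · rcases hQ (i+1) with hα1 | hG1
            · exact absurd ⟨hα, by convert hα1 using 3 <;> omega⟩ (hvert i)
            · exact absurd hG1 hni
          · exact hGz
      have hstep2 : ∀ k i, G (i + 2*k) = 0 ↔ G i = 0 := by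
        intro k
        induction k with
        | zero => intro i; simp
        | succ m ih =>
          intro i
          rw [show i + 2*(m+1) = (i + 2*m) + 1 + 1 from by ring]
          have a1 := halt (i + 2*m)
          have a2 := halt (i + 2*m + 1)
          have a3 := ih i
          tauto
      rcases Nat.even_or_odd n with he | ho
      · obtain ⟨m, hm2⟩ := he
        have hm3 : 3 ≤ m := by omega
        have hj : ∃ j, ¬ G j = 0 := by
          by_cases h0 : G 0 = 0
          · exact ⟨1, (halt 0).1 h0⟩
          · exact ⟨0, h0⟩
        obtain ⟨j, hGj⟩ := hj
        have hGj2 : ¬ G (j+2) = 0 := fun hc => hGj ((hstep2 1 j).1 (by convert hc using 2))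
        have hGj4 : ¬ G (j+4) = 0 := fun hc => hGj ((hstep2 2 j).1 (by convert hc using 2))
        have hv0 : a (j+1) - a j = 0 := (hQ j).resolve_right hGj
        have hv2 : a (j+2+1) - a (j+2) = 0 := (hQ (j+2)).resolve_right hGj2
        have hv4 : a (j+4+1) - a (j+4) = 0 := (hQ (j+4)).resolve_right hGj4
        have e0 : a (j+1) = a j := by linarith
        have e2 : a (j+3) = a (j+2) := by
          have : a (j+2+1) = a (j+2) := by linarith
          convert this using 2
        have e4 : a (j+5) = a (j+4) := by
          have : a (j+4+1) = a (j+4) := by linarith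
          convert this using 2
        have hn6 : 5 < n := by omega
        have hc1 := Hconv (j+2) (j+1) (j+5)
          (hne2 j 1 2 (by omega) (by omega) (by omega))
          (by convert hne2 j 1 3 (by omega) (by omega) (by omega) using 2 <;> omega)
          (hne2 j 5 2 (by omega) (by omega) (by omega))
          (by convert hne2 j 5 3 (by omega) (by omega) (by omega) using 2 <;> omega)
        have hc2 := Hconv j (j+3) (j+5)
          (by simpa using hne2 j 3 0 (by omega) hn0 (by omega))
          (hne2 j 3 1 (by omega) (by omega) (by omega))
          (by simpa using hne2 j 5 0 (by omega) hn0 (by omega))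
          (hne2 j 5 1 (by omega) (by omega) (by omega))
        have hc3 := Hconv (j+4) (j+1) (j+3)
          (hne2 j 1 4 (by omega) (by omega) (by omega))
          (by convert hne2 j 1 5 (by omega) (by omega) (by omega) using 2 <;> omega)
          (hne2 j 3 4 (by omega) (by omega) (by omega))
          (by convert hne2 j 3 5 (by omega) (by omega) (by omega) using 2 <;> omega)
        -- normalize indices like (j+2)+1 to j+3
        rw [show (j+2)+1 = j+3 from rfl] at hc1
        rw [show (j+4)+1 = j+5 from rfl] at hc3
        rw [e2, e0, e4] at hc1
        rw [e0, e2, e4] at hc2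
        rw [e4, e0, e2] at hc3
        have P1 : 0 < (b (j+3) - b (j+2))^2 * ((a j - a (j+2)) * (a (j+4) - a (j+2))) :=
          lt_of_lt_of_eq hc1 (by ring)
        have P2 : 0 < (b (j+1) - b j)^2 * ((a (j+2) - a j) * (a (j+4) - a j)) :=
          lt_of_lt_of_eq hc2 (by ring)
        have P3 : 0 < (b (j+5) - b (j+4))^2 * ((a j - a (j+4)) * (a (j+2) - a (j+4))) :=
          lt_of_lt_of_eq hc3 (by ring)
        have hB2 : b (j+3) - b (j+2) ≠ 0 := fun hb => unz (j+2) ⟨by convert hv2 using 3, by convert hb using 3⟩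
        have hB0 : b (j+1) - b j ≠ 0 := fun hb => unz j ⟨hv0, hb⟩
        have hB4 : b (j+5) - b (j+4) ≠ 0 := fun hb => unz (j+4) ⟨by convert hv4 using 3, by convert hb using 3 <;> omega⟩
        have sq2 : 0 < (b (j+3) - b (j+2))^2 := lt_of_le_of_ne (sq_nonneg _) (Ne.symm (pow_ne_zero 2 hB2))
        have sq0 : 0 < (b (j+1) - b j)^2 := lt_of_le_of_ne (sq_nonneg _) (Ne.symm (pow_ne_zero 2 hB0))
        have sq4 : 0 < (b (j+5) - b (j+4))^2 := lt_of_le_of_ne (sq_nonneg _) (Ne.symm (pow_ne_zero 2 hB4))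
        have Q1 : 0 < (a j - a (j+2)) * (a (j+4) - a (j+2)) := (mul_pos_iff_of_pos_left sq2).1 P1
        have Q2 : 0 < (a (j+2) - a j) * (a (j+4) - a j) := (mul_pos_iff_of_pos_left sq0).1 P2
        have Q3 : 0 < (a j - a (j+4)) * (a (j+2) - a (j+4)) := (mul_pos_iff_of_pos_left sq4).1 P3
        nlinarith [mul_pos (mul_pos Q1 Q2) Q3,
          sq_nonneg ((a j - a (j+2)) * (a (j+2) - a (j+4)) * (a (j+4) - a j))]
      · obtain ⟨k, hk⟩ := ho
        have e1 : G (0 + n) = 0 ↔ G 0 = 0 := by rw [hGper]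
        have e2 := hstep2 k 1
        have e3 := halt 0
        rw [show (0:ℕ) + n = 1 + 2*k from by omega] at e1
        tauto

  · have hα : ∀ i, a (i+1) - a i ≠ 0 := by
      intro i hc
      have hp := Hperp i
      rw [hc] at hp
      have hb : b (i+1) - b i = 0 := by
        rcases mul_eq_zero.1 (by linarith : h * (b (i+1) - b i) = 0) with hc' | hc'
        · exact absurd hc' hh
        · exact hc'
      exact unz i ⟨hc, hb⟩
    set t : ℕ → ℝ := fun i => (b (i + 1) - b i) / (a (i + 1) - a i) with ht
    have hβt : ∀ i, b (i+1) - b i = t i * (a (i+1) - a i) := by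
      intro i
      rw [ht]
      exact (div_mul_cancel₀ _ (hα i)).symm
    have htper : ∀ i, t (i + n) = t i := by
      intro i
      simp only [ht]
      rw [show i + n + 1 = (i+1) + n from by omega, hpa, hpa, hpb, hpb]
    have tmod : ∀ i, t i = t (i % n) := per_mod t htper
    have E1 : ∀ i, b i = t i * (a i - p) - h * (t i)^2 := by
      intro i
      have hfe := Hfeet i
      have hpe := Hperp i
      rw [hβt i] at hfe hpe
      have h2 : (a (i+1) - a i) * (b i - (t i * (a i - p) - h * (t i)^2)) = 0 := by
        linear_combination (-1) * hfe + t i * hpe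
      rcases mul_eq_zero.1 h2 with hc | hc
      · exact absurd hc (hα i)
      · linarith
    have E2 : ∀ i, b (i+1) = t i * (a (i+1) - p) - h * (t i)^2 := by
      intro i
      linear_combination E1 i + hβt i
    have tinj : ∀ i j, i % n ≠ j % n → t i ≠ t j := by
      intro i j hij heq
      by_cases hj : (i+1) % n = j % n
      · have hE2j := E2 j
        rw [← heq] at hE2j
        have hj1 : (j+1) % n = (i+2) % n := by
          rw [← Nat.mod_add_mod, ← hj, Nat.mod_add_mod]
        apply Hnd i (i+1) (j+1) (hne1 i 1 one_pos (by omega)).symm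
          (by rw [hj1]; exact (hne1 i 2 two_pos (by omega)).symm)
          (by rw [hj1]; exact hne2 i 1 2 (by omega) (by omega) (by omega))
        linear_combination (a (i+1) - a i) * hE2j - (a (i+1) - a i) * E1 i
          - (a (j+1) - a i) * hβt i
      · have hE1j := E1 j
        rw [← heq] at hE1j
        apply Hnd i (i+1) j (hne1 i 1 one_pos (by omega)).symm hij (fun hc => hj hc)
        linear_combination (a (i+1) - a i) * hE1j - (a (i+1) - a i) * E1 i
          - (a j - a i) * hβt i
    have vtxa : ∀ i, a (i+1) = p + h * (t i + t (i+1)) := by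
      intro i
      have htne : t i ≠ t (i+1) := tinj i (i+1) (hne1 i 1 one_pos (by omega)).symm
      have key : (t i - t (i+1)) * (a (i+1) - p - h * (t i + t (i+1))) = 0 := by
        linear_combination E1 (i+1) - E2 i
      rcases mul_eq_zero.1 key with hc | hc
      · exact absurd (by linarith) htne
      · linarith
    have vtxb : ∀ i, b (i+1) = h * (t i * t (i+1)) := by
      intro i
      linear_combination E1 (i+1) + t (i+1) * vtxa i
    have SGN : ∀ i j k : ℕ, (j+1) % n ≠ i % n → (j+1) % n ≠ (i + 1) % n →
        (k+1) % n ≠ i % n → (k+1) % n ≠ (i + 1) % n →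
        0 < ((t i - t j) * (t i - t (j+1))) * ((t i - t k) * (t i - t (k+1))) := by
      intro i j k h1 h2 h3 h4
      have hc := Hconv i (j+1) (k+1) h1 h2 h3 h4
      have CJ : (a (i+1) - a i) * (b (j+1) - b i) - (b (i+1) - b i) * (a (j+1) - a i)
          = (a (i+1) - a i) * h * ((t i - t j) * (t i - t (j+1))) := by
        rw [hβt i, vtxb j, vtxa j, E1 i]; ring
      have CK : (a (i+1) - a i) * (b (k+1) - b i) - (b (i+1) - b i) * (a (k+1) - a i)
          = (a (i+1) - a i) * h * ((t i - t k) * (t i - t (k+1))) := by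
        rw [hβt i, vtxb k, vtxa k, E1 i]; ring
      rw [CJ, CK] at hc
      have hsq : 0 < ((a (i+1) - a i) * h)^2 :=
        lt_of_le_of_ne (sq_nonneg _) (Ne.symm (pow_ne_zero 2 (mul_ne_zero (hα i) hh)))
      have hre : ((a (i+1) - a i) * h * ((t i - t j) * (t i - t (j+1)))) *
          ((a (i+1) - a i) * h * ((t i - t k) * (t i - t (k+1)))) =
          ((a (i+1) - a i) * h)^2 *
            (((t i - t j) * (t i - t (j+1))) * ((t i - t k) * (t i - t (k+1)))) := by ring
      rw [hre] at hc
      exact (mul_pos_iff_of_pos_left hsq).1 hc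
    obtain ⟨M, hMr, hMmax⟩ := Finset.exists_max_image (Finset.range n) t ⟨0, by simpa using hn0⟩
    have hMn : M < n := Finset.mem_range.1 hMr
    obtain ⟨s, hsr, hsmax⟩ := Finset.exists_max_image ((Finset.range n).erase M) t
      ⟨if M = 0 then 1 else 0, by
        rcases eq_or_ne M 0 with hM0 | hM0
        · simp [hM0]; omega
        · simp [hM0]; omega⟩
    have hsM : s ≠ M := (Finset.mem_erase.1 hsr).1
    have hsn : s < n := Finset.mem_range.1 (Finset.mem_erase.1 hsr).2
    have hMs : M % n = M := Nat.mod_eq_of_lt hMn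
    have hss : s % n = s := Nat.mod_eq_of_lt hsn
    have tsM : t s < t M :=
      lt_of_le_of_ne (hMmax s (Finset.mem_range.2 hsn)) (tinj s M (by rw [hMs, hss]; exact hsM))
    have hsec : ∀ r, r < n → r ≠ M → r ≠ s → t r < t s := by
      intro r hr hrM hrs
      exact lt_of_le_of_ne
        (hsmax r (Finset.mem_erase.2 ⟨hrM, Finset.mem_range.2 hr⟩))
        (tinj r s (by rw [hss, Nat.mod_eq_of_lt hr]; exact hrs))
    have pair1 : ∃ j1 : ℕ, ((j1+1) % n ≠ s % n) ∧ ((j1+1) % n ≠ (s + 1) % n) ∧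
        (t s - t j1) * (t s - t (j1+1)) < 0 := by
      by_cases h1 : (M+1) % n = s
      · refine ⟨M + n - 1, ?_, ?_, ?_⟩
        · rw [show M + n - 1 + 1 = M + n from by omega, Nat.add_mod_right, hss, hMs]
          exact fun hc => hsM hc.symm
        · rw [show M + n - 1 + 1 = M + n from by omega, Nat.add_mod_right, hMs]
          intro hc
          apply hne1 M 2 two_pos (by omega)
          rw [hMs]
          calc (M + 2) % n = ((M+1) % n + 1) % n := by rw [Nat.mod_add_mod]
            _ = (s + 1) % n := by rw [h1]
            _ = M := by rw [← hc]
        · have f1 : t (M + n - 1) < t s := by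
            rw [tmod (M + n - 1)]
            apply hsec
            · exact Nat.mod_lt _ hn0
            · rw [show M + n - 1 = M + (n-1) from by omega]
              intro hc
              apply hne1 M (n-1) (by omega) (by omega)
              rw [hMs]; exact hc
            · rw [show M + n - 1 = M + (n-1) from by omega, ← h1]
              exact hne2 M (n-1) 1 (by omega) (by omega) (by omega)
          have f2 : t (M + n - 1 + 1) = t M := by
            rw [show M + n - 1 + 1 = M + n from by omega, htper]
          rw [f2]
          exact mul_neg_of_pos_of_neg (by linarith) (by linarith)
      · refine ⟨M, by rw [hss]; exact h1, ?_, ?_⟩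
        · intro hc
          have h3 : M % n = s % n := Nat.ModEq.add_right_cancel' 1 hc
          rw [hMs, hss] at h3
          exact hsM h3.symm
        · have f1 : t (M+1) < t s := by
            rw [tmod (M+1)]
            apply hsec
            · exact Nat.mod_lt _ hn0
            · intro hc
              apply hne1 M 1 one_pos (by omega)
              rw [hMs]; exact hc
            · exact h1
          exact mul_neg_of_neg_of_pos (by linarith) (by linarith)
    have pair2 : ∃ j2 : ℕ, ((j2+1) % n ≠ s % n) ∧ ((j2+1) % n ≠ (s + 1) % n) ∧
        0 < (t s - t j2) * (t s - t (j2+1)) := by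
      have key : ∀ j2 : ℕ, (j2 % n ≠ M) → (j2 % n ≠ s) → ((j2+1) % n ≠ M) → ((j2+1) % n ≠ s) →
          0 < (t s - t j2) * (t s - t (j2+1)) := by
        intro j2 w1 w2 w3 w4
        have f1 : t j2 < t s := by
          rw [tmod j2]; exact hsec _ (Nat.mod_lt _ hn0) w1 w2
        have f2 : t (j2+1) < t s := by
          rw [tmod (j2+1)]; exact hsec _ (Nat.mod_lt _ hn0) w3 w4
        exact mul_pos (by linarith) (by linarith)
      have e20 : (M+2) % n ≠ M := by
        intro hc; apply hne1 M 2 two_pos (by omega); rw [hMs]; exact hc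
      have e30 : (M+3) % n ≠ M := by
        intro hc; apply hne1 M 3 three_pos (by omega); rw [hMs]; exact hc
      have e40 : (M+4) % n ≠ M := by
        intro hc; apply hne1 M 4 four_pos (by omega); rw [hMs]; exact hc
      by_cases h1 : (M+1) % n = s ∨ (M+2) % n = s
      · have ws1 : (s+1) % n ≠ M := by
          rcases h1 with ha | ha
          · rw [← ha, Nat.mod_add_mod]; exact e20
          · rw [← ha, Nat.mod_add_mod]; exact e30
        have ws2 : (s+2) % n ≠ M := by
          rcases h1 with ha | ha
          · rw [← ha, Nat.mod_add_mod]
            rw [show M + 1 + 2 = M + 3 from by omega]; exact e30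
          · rw [← ha, Nat.mod_add_mod]
            rw [show M + 2 + 2 = M + 4 from by omega]; exact e40
        have wss1 : (s+1) % n ≠ s := by
          intro hc; apply hne1 s 1 one_pos (by omega); rw [hss]; exact hc
        have wss2 : (s+2) % n ≠ s := by
          intro hc; apply hne1 s 2 two_pos (by omega); rw [hss]; exact hc
        refine ⟨s + 1, ?_, ?_, ?_⟩
        · rw [hss]
          rw [show s + 1 + 1 = s + 2 from by omega]
          exact wss2
        · rw [show s + 1 + 1 = s + 2 from by omega]
          exact hne2 s 2 1 (by omega) (by omega) (by omega)
        · exact key (s+1) ws1 wss1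
            (by rw [show s + 1 + 1 = s + 2 from by omega]; exact ws2)
            (by rw [show s + 1 + 1 = s + 2 from by omega]; exact wss2)
      · push_neg at h1
        obtain ⟨h1a, h1b⟩ := h1
        refine ⟨M + 1, ?_, ?_, ?_⟩
        · rw [hss, show M + 1 + 1 = M + 2 from by omega]
          exact h1b
        · rw [show M + 1 + 1 = M + 2 from by omega]
          intro hc
          have h3 : (M+1) % n = s % n := Nat.ModEq.add_right_cancel' 1 hc
          rw [hss] at h3
          exact h1a h3
        · apply key (M+1)
          · intro hc; apply hne1 M 1 one_pos (by omega); rw [hMs]; exact hc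
          · exact h1a
          · rw [show M + 1 + 1 = M + 2 from by omega]; exact e20
          · rw [show M + 1 + 1 = M + 2 from by omega]; exact h1b
    obtain ⟨j1, c1, c2, hneg⟩ := pair1
    obtain ⟨j2, d1, d2, hpos⟩ := pair2
    have := SGN s j1 j2 c1 c2 d1 d2
    nlinarith [mul_neg_of_neg_of_pos hneg hpos]
end SimsonAux
/-- No nondegenerate convex `n`-gon with `n ≥ 5` admits a Simson point.
The polygon is given by its vertices `V 0, ..., V (n-1)`, extended `n`-periodically;
nondegeneracy means no three vertices are collinear; convexity means that all vertices
off a given side line lie strictly on the same side of it.  A Simson point is a point `P`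
whose orthogonal projections (feet `F i`) onto the side lines `Vᵢ Vᵢ₊₁` are all collinear. -/
theorem stmt_1 (n : ℕ) (hn : 5 ≤ n) (V : ℕ → EuclideanSpace ℝ (Fin 2))
    (hper : ∀ i, V (i + n) = V i)
    -- nondegeneracy: no three vertices are collinear
    (hnd : ∀ i j k, i < j → j < k → k < n →
      ¬ Collinear ℝ ({V i, V j, V k} : Set (EuclideanSpace ℝ (Fin 2))))
    -- convexity: vertices not on the line of side `i` are strictly on the same side of it
    (hconv : ∀ i j k : ℕ, V j ≠ V i → V j ≠ V (i + 1) → V k ≠ V i → V k ≠ V (i + 1) →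
      (affineSpan ℝ ({V i, V (i + 1)} : Set (EuclideanSpace ℝ (Fin 2)))).SSameSide
        (V j) (V k)) :
    ¬ ∃ (P : EuclideanSpace ℝ (Fin 2)) (F : ℕ → EuclideanSpace ℝ (Fin 2)),
      (∀ i, F i ∈ affineSpan ℝ ({V i, V (i + 1)} : Set (EuclideanSpace ℝ (Fin 2))) ∧
        ⟪P - F i, V (i + 1) - V i⟫ = 0) ∧
      Collinear ℝ (Set.range F) := by
  rintro ⟨P, F, hF, hcol⟩
  have hn0 : 0 < n := by omega
  have hne2 : ∀ (i k l : ℕ), k < n → l < n → k ≠ l → (i + k) % n ≠ (i + l) % n := by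
    intro i k l hk hl hkl he
    have hm : Nat.ModEq n (i + k) (i + l) := he
    have h2 : Nat.ModEq n k l := Nat.ModEq.add_left_cancel' i hm
    have h3 : k % n = l % n := h2
    rw [Nat.mod_eq_of_lt hk, Nat.mod_eq_of_lt hl] at h3
    exact hkl h3
  have hne1 : ∀ i k, 0 < k → k < n → (i + k) % n ≠ i % n := by
    intro i k h1 h2
    simpa using hne2 i k 0 h2 hn0 (by omega)
  have hinner : ∀ i, (P 0 - F i 0) * (V (i+1) 0 - V i 0) +
      (P 1 - F i 1) * (V (i+1) 1 - V i 1) = 0 := by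
    intro i
    have hx := (hF i).2
    have e : ⟪P - F i, V (i+1) - V i⟫ = (P 0 - F i 0) * (V (i+1) 0 - V i 0) +
        (P 1 - F i 1) * (V (i+1) 1 - V i 1) := by
      simp [PiLp.inner_apply, RCLike.inner_apply, Fin.sum_univ_two]; ring
    rw [e] at hx
    exact hx
  have hVmod : ∀ i, V i = V (i % n) := SimsonAux.per_mod V hper
  have ncol : ∀ i j k, i < j → j < k → k < n →
      (V j 0 - V i 0) * (V k 1 - V i 1) - (V j 1 - V i 1) * (V k 0 - V i 0) ≠ 0 :=
    fun i j k h1 h2 h3 hc => hnd i j k h1 h2 h3 (SimsonAux.cross_zero_collinear hc)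
  have crossV : ∀ i j k, i % n ≠ j % n → i % n ≠ k % n → j % n ≠ k % n →
      (V j 0 - V i 0) * (V k 1 - V i 1) - (V j 1 - V i 1) * (V k 0 - V i 0) ≠ 0 := by
    intro i j k hij hik hjk hc
    rw [hVmod i, hVmod j, hVmod k] at hc
    have b1 : i % n < n := Nat.mod_lt _ hn0
    have b2 : j % n < n := Nat.mod_lt _ hn0
    have b3 : k % n < n := Nat.mod_lt _ hn0
    rcases Nat.lt_trichotomy (i % n) (j % n) with o1 | o1 | o1
    · rcases Nat.lt_trichotomy (j % n) (k % n) with o2 | o2 | o2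
      · exact ncol _ _ _ o1 o2 b3 (by linear_combination hc)
      · exact hjk o2
      · rcases Nat.lt_trichotomy (i % n) (k % n) with o3 | o3 | o3
        · exact ncol _ _ _ o3 o2 b2 (by linear_combination -hc)
        · exact hik o3
        · exact ncol _ _ _ o3 o1 b2 (by linear_combination hc)
    · exact hij o1
    · rcases Nat.lt_trichotomy (i % n) (k % n) with o3 | o3 | o3
      · exact ncol _ _ _ o1 o3 b3 (by linear_combination -hc)
      · exact hik o3
      · rcases Nat.lt_trichotomy (j % n) (k % n) with o2 | o2 | o2
        · exact ncol _ _ _ o2 o3 b1 (by linear_combination hc)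
        · exact hjk o2
        · exact ncol _ _ _ o2 o1 b1 (by linear_combination -hc)
  have vne : ∀ i j, i % n ≠ j % n → V i ≠ V j := by
    intro i j hij he
    by_cases hk : (i+1) % n = j % n
    · apply crossV i j (i+2) hij (hne1 i 2 two_pos (by omega)).symm
        (by rw [← hk]; exact hne2 i 1 2 (by omega) (by omega) (by omega))
      rw [he]; ring
    · apply crossV i j (i+1) hij (hne1 i 1 one_pos (by omega)).symm
        (fun hc => hk hc.symm)
      rw [he]; ring
  have hconvX : ∀ i j k, j % n ≠ i % n → j % n ≠ (i+1) % n →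
      k % n ≠ i % n → k % n ≠ (i+1) % n →
      0 < ((V (i+1) 0 - V i 0) * (V j 1 - V i 1) - (V (i+1) 1 - V i 1) * (V j 0 - V i 0)) *
          ((V (i+1) 0 - V i 0) * (V k 1 - V i 1) - (V (i+1) 1 - V i 1) * (V k 0 - V i 0)) := by
    intro i j k h1 h2 h3 h4
    exact SimsonAux.ssameside_cross (vne i (i+1) (hne1 i 1 one_pos (by omega)).symm)
      (hconv i j k (vne j i h1) (vne j (i+1) h2) (vne k i h3) (vne k (i+1) h4))
  rw [collinear_iff_exists_forall_eq_smul_vadd] at hcol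
  obtain ⟨q, v, hqv⟩ := hcol
  choose r hr using fun i => hqv (F i) ⟨i, rfl⟩
  have key : ∀ (w0 w1 : ℝ), ¬ (w0 = 0 ∧ w1 = 0) →
      (∀ i, (F i 0 - q 0) * w1 - (F i 1 - q 1) * w0 = 0) → False := by
    intro w0 w1 hw hFw
    have hc2 : (0:ℝ) < w0^2 + w1^2 := by
      rcases not_and_or.1 hw with h' | h' <;> positivity
    apply SimsonAux.real_main n hn
      (fun i => (V i 0 - q 0) * w0 + (V i 1 - q 1) * w1)
      (fun i => -(V i 0 - q 0) * w1 + (V i 1 - q 1) * w0)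
      (fun i => (F i 0 - q 0) * w0 + (F i 1 - q 1) * w1)
      ((P 0 - q 0) * w0 + (P 1 - q 1) * w1)
      (-(P 0 - q 0) * w1 + (P 1 - q 1) * w0)
    · intro i
      show (V (i+n) 0 - q 0) * w0 + (V (i+n) 1 - q 1) * w1 = _
      rw [hper i]
    · intro i
      show -(V (i+n) 0 - q 0) * w1 + (V (i+n) 1 - q 1) * w0 = _
      rw [hper i]
    · intro i j k h1 h2 h3
      refine fun hc => crossV i j k h1 h2 h3 ?_
      have h9 : (w0^2 + w1^2) *
          ((V j 0 - V i 0) * (V k 1 - V i 1) - (V j 1 - V i 1) * (V k 0 - V i 0)) = 0 := by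
        linear_combination hc
      exact (mul_eq_zero.1 h9).resolve_left (ne_of_gt hc2)
    · intro i j k h1 h2 h3 h4
      have hX := hconvX i j k h1 h2 h3 h4
      exact lt_of_lt_of_eq (mul_pos (by positivity : (0:ℝ) < (w0^2 + w1^2)^2) hX) (by ring)
    · intro i
      have hm := SimsonAux.mem_span_cross ((hF i).1)
      show ((V (i+1) 0 - q 0) * w0 + (V (i+1) 1 - q 1) * w1 -
          ((V i 0 - q 0) * w0 + (V i 1 - q 1) * w1)) * (0 - _) - _ = 0
      linear_combination (w0^2 + w1^2) * hm +
        ((V (i+1) 0 - V i 0) * w0 + (V (i+1) 1 - V i 1) * w1) * hFw i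
    · intro i
      have hi := hinner i
      show (_ - ((F i 0 - q 0) * w0 + (F i 1 - q 1) * w1)) * _ + _ * _ = 0
      linear_combination (w0^2 + w1^2) * hi +
        ((V (i+1) 0 - V i 0) * w1 - (V (i+1) 1 - V i 1) * w0) * hFw i
  by_cases hv : v = 0
  · by_cases hPq : P = q
    · have hFq : ∀ i, F i = q := by
        intro i
        rw [hr i, hv]
        simp
      have hPmem : ∀ i, P ∈ affineSpan ℝ ({V i, V (i+1)} : Set (EuclideanSpace ℝ (Fin 2))) := by
        intro i
        have := (hF i).1
        rwa [hFq i, ← hPq] at this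
      have c0 := SimsonAux.mem_span_cross (hPmem 0)
      have c1 := SimsonAux.mem_span_cross (hPmem 1)
      have c2 := SimsonAux.mem_span_cross (hPmem 2)
      by_cases hPV : P = V 1
      · rw [hPV] at c2
        have m1 : (1:ℕ) % n = 1 := Nat.mod_eq_of_lt (by omega)
        have m2 : (2:ℕ) % n = 2 := Nat.mod_eq_of_lt (by omega)
        have m3 : (3:ℕ) % n = 3 := Nat.mod_eq_of_lt (by omega)
        apply crossV 1 2 3 (by rw [m1, m2]; omega) (by rw [m1, m3]; omega)
          (by rw [m2, m3]; omega)
        linear_combination c2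
      · have hz : ¬ (P 0 - V 1 0 = 0 ∧ P 1 - V 1 1 = 0) := by
          rintro ⟨u1, u2⟩
          exact hPV (SimsonAux.pt_ext (by linarith) (by linarith))
        have c0' : (V 1 0 - V 0 0) * (P 1 - V 1 1) - (V 1 1 - V 0 1) * (P 0 - V 1 0) = 0 := by
          linear_combination c0
        have hdd := SimsonAux.ddep c0' c1 hz
        have m0 : (0:ℕ) % n = 0 := Nat.mod_eq_of_lt (by omega)
        have m1 : (1:ℕ) % n = 1 := Nat.mod_eq_of_lt (by omega)
        have m2 : (2:ℕ) % n = 2 := Nat.mod_eq_of_lt (by omega)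
        apply crossV 0 1 2 (by rw [m0, m1]; omega) (by rw [m0, m2]; omega)
          (by rw [m1, m2]; omega)
        linear_combination hdd
    · apply key (-(P 1 - q 1)) (P 0 - q 0)
      · rintro ⟨u1, u2⟩
        exact hPq (SimsonAux.pt_ext (by linarith) (by linarith))
      · intro i
        have hFq : F i = q := by rw [hr i, hv]; simp
        rw [hFq]
        ring
  · apply key (v 0) (v 1)
    · rintro ⟨u1, u2⟩
      apply hv
      exact SimsonAux.pt_ext u1 u2
    · intro i
      have h0 : F i 0 = r i * v 0 + q 0 := by rw [hr i]; rfl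
      have h1 : F i 1 = r i * v 1 + q 1 := by rw [hr i]; rfl
      rw [h0, h1]
      ring
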